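/- Let x_1, …, x_N be unit vectors in ℝ². Then ∑_{i,j=1}^N arccos|⟨x_i, x_j⟩| ≤ πN²/4 if N is even, and ∑_{i,j=1}^N arccos|⟨x_i, x_j⟩| ≤ π(N² − 1)/4 if N is odd (the sum being over all ordered pairs (i, j), including i = j). -/

import Mathlib

open MeasureTheory intervalIntegral

noncomputable def sep (p q u : ℝ) : ℝ :=
  if Real.sin (p - u) * Real.sin (q - u) < 0 then 1 else 0

lemma sep_nonneg (p q u : ℝ) : 0 ≤ sep p q u := by unfold sep; split <;> norm_num

lemma sep_le_one (p q u : ℝ) : sep p q u ≤ 1 := by unfold sep; split <;> norm_num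

lemma sep_measurable (p q : ℝ) : Measurable (sep p q) := by
  apply Measurable.ite _ measurable_const measurable_const
  exact measurableSet_lt (by fun_prop) measurable_const

lemma sep_intervalIntegrable (p q a b : ℝ) : IntervalIntegrable (sep p q) volume a b := by
  rw [intervalIntegrable_iff]
  have : IsFiniteMeasure (volume.restrict (Set.uIoc a b)) := by
    constructor
    rw [Measure.restrict_apply_univ, Set.uIoc]; simp [Real.volume_Ioc]
  apply Integrable.mono' (integrable_const (1:ℝ)) ((sep_measurable p q).aestronglyMeasurable.restrict)
  filter_upwards with u
  rw [Real.norm_eq_abs, abs_of_nonneg (sep_nonneg p q u)]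
  exact sep_le_one p q u

lemma sep_periodic (p q : ℝ) : Function.Periodic (sep p q) (2 * Real.pi) := by
  intro u
  unfold sep
  rw [show p - (u + 2*Real.pi) = p - u - 2*Real.pi by ring,
      show q - (u + 2*Real.pi) = q - u - 2*Real.pi by ring,
      Real.sin_sub_two_pi, Real.sin_sub_two_pi]

lemma ae_ne (b : ℝ) : ∀ᵐ x : ℝ, x ≠ b := by
  rw [MeasureTheory.ae_iff]
  simpa using measure_singleton b

lemma integral_eq_of_eqOn_Ioo {f : ℝ → ℝ} {a b c : ℝ} (hab : a ≤ b)
    (hf : ∀ x ∈ Set.Ioo a b, f x = c)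
    (hi : IntervalIntegrable f volume a b) :
    ∫ x in a..b, f x = c * (b - a) := by
  have h2 : ∫ _x in a..b, (c:ℝ) = c * (b-a) := by
    rw [intervalIntegral.integral_const, smul_eq_mul, mul_comm]
  rw [← h2]
  apply intervalIntegral.integral_congr_ae
  filter_upwards [ae_ne b] with x hx hx2
  rw [Set.uIoc_of_le hab] at hx2
  exact hf x ⟨hx2.1, lt_of_le_of_ne hx2.2 hx⟩

open Real in
lemma sin_neg_on (v : ℝ) (h1 : Real.pi < v) (h2 : v < 2*Real.pi) : Real.sin v < 0 := by
  rw [← Real.sin_sub_two_pi]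
  apply Real.sin_neg_of_neg_of_neg_pi_lt <;> linarith

open Real in
lemma sep0_integral_core (d : ℝ) (hd0 : 0 ≤ d) (hd2 : d < 2*π) :
    ∫ u in (0:ℝ)..(2*π), sep d 0 u = 2 * Real.arccos (Real.cos d) := by
  have pi_pos := Real.pi_pos
  rcases le_or_gt d π with hle | hgt
  · -- pieces 0..d (1), d..π (0), π..π+d (1), π+d..2π (0)
    have i1 : ∫ u in (0:ℝ)..d, sep d 0 u = 1 * (d - 0) := by
      apply integral_eq_of_eqOn_Ioo hd0 _ (sep_intervalIntegrable _ _ _ _)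
      intro v hv
      unfold sep
      rw [if_pos]
      have h1 : 0 < Real.sin (d - v) := Real.sin_pos_of_pos_of_lt_pi (by linarith [hv.2]) (by linarith [hv.1])
      have h2 : 0 < Real.sin v := Real.sin_pos_of_pos_of_lt_pi hv.1 (by linarith [hv.2])
      rw [zero_sub, Real.sin_neg]
      nlinarith
    have i2 : ∫ u in d..π, sep d 0 u = 0 * (π - d) := by
      apply integral_eq_of_eqOn_Ioo hle _ (sep_intervalIntegrable _ _ _ _)
      intro v hv
      unfold sep
      rw [if_neg]
      have h1 : Real.sin (d - v) ≤ 0 := by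
        rw [show d - v = -(v - d) by ring, Real.sin_neg]
        have : 0 < Real.sin (v - d) := Real.sin_pos_of_pos_of_lt_pi (by linarith [hv.1]) (by linarith [hv.2])
        linarith
      have h2 : 0 < Real.sin v := Real.sin_pos_of_pos_of_lt_pi (by linarith [hv.1, hd0]) hv.2
      rw [zero_sub, Real.sin_neg]
      nlinarith
    have i3 : ∫ u in π..(π+d), sep d 0 u = 1 * ((π+d) - π) := by
      apply integral_eq_of_eqOn_Ioo (by linarith) _ (sep_intervalIntegrable _ _ _ _)
      intro v hv
      unfold sep
      rw [if_pos]
      have h1 : Real.sin (d - v) < 0 := by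
        rw [show d - v = -(v - d) by ring, Real.sin_neg]
        have : 0 < Real.sin (v - d) := Real.sin_pos_of_pos_of_lt_pi (by linarith [hv.1]) (by linarith [hv.2])
        linarith
      have h2 : Real.sin v < 0 := sin_neg_on v hv.1 (by linarith [hv.2])
      rw [zero_sub, Real.sin_neg]
      nlinarith
    have i4 : ∫ u in (π+d)..(2*π), sep d 0 u = 0 * (2*π - (π+d)) := by
      apply integral_eq_of_eqOn_Ioo (by linarith) _ (sep_intervalIntegrable _ _ _ _)
      intro v hv
      unfold sep
      rw [if_neg]
      have h1 : 0 < Real.sin (d - v) := by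
        rw [show d - v = -(v - d) by ring, Real.sin_neg]
        have : Real.sin (v - d) < 0 := sin_neg_on (v - d) (by linarith [hv.1]) (by linarith [hv.2])
        linarith
      have h2 : Real.sin v < 0 := sin_neg_on v (by linarith [hv.1]) hv.2
      rw [zero_sub, Real.sin_neg]
      nlinarith
    have s1 : ∫ u in (0:ℝ)..π, sep d 0 u = (∫ u in (0:ℝ)..d, sep d 0 u) + ∫ u in d..π, sep d 0 u :=
      (intervalIntegral.integral_add_adjacent_intervals (sep_intervalIntegrable _ _ _ _) (sep_intervalIntegrable _ _ _ _)).symm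
    have s2 : ∫ u in π..(2*π), sep d 0 u = (∫ u in π..(π+d), sep d 0 u) + ∫ u in (π+d)..(2*π), sep d 0 u :=
      (intervalIntegral.integral_add_adjacent_intervals (sep_intervalIntegrable _ _ _ _) (sep_intervalIntegrable _ _ _ _)).symm
    have s0 : ∫ u in (0:ℝ)..(2*π), sep d 0 u = (∫ u in (0:ℝ)..π, sep d 0 u) + ∫ u in π..(2*π), sep d 0 u :=
      (intervalIntegral.integral_add_adjacent_intervals (sep_intervalIntegrable _ _ _ _) (sep_intervalIntegrable _ _ _ _)).symm
    rw [s0, s1, s2, i1, i2, i3, i4, Real.arccos_cos hd0 hle]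
    ring
  · -- pieces 0..d-π (0), d-π..π (1), π..d (0), d..2π (1)
    have i1 : ∫ u in (0:ℝ)..(d-π), sep d 0 u = 0 * ((d-π) - 0) := by
      apply integral_eq_of_eqOn_Ioo (by linarith) _ (sep_intervalIntegrable _ _ _ _)
      intro v hv
      unfold sep
      rw [if_neg]
      have h1 : Real.sin (d - v) < 0 := sin_neg_on _ (by linarith [hv.2]) (by linarith [hv.1])
      have h2 : 0 < Real.sin v := Real.sin_pos_of_pos_of_lt_pi hv.1 (by linarith [hv.2])
      rw [zero_sub, Real.sin_neg]
      nlinarith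
    have i2 : ∫ u in (d-π)..π, sep d 0 u = 1 * (π - (d-π)) := by
      apply integral_eq_of_eqOn_Ioo (by linarith) _ (sep_intervalIntegrable _ _ _ _)
      intro v hv
      unfold sep
      rw [if_pos]
      have h1 : 0 < Real.sin (d - v) := Real.sin_pos_of_pos_of_lt_pi (by linarith [hv.2]) (by linarith [hv.1])
      have h2 : 0 < Real.sin v := Real.sin_pos_of_pos_of_lt_pi (by linarith [hv.1]) hv.2
      rw [zero_sub, Real.sin_neg]
      nlinarith
    have i3 : ∫ u in π..d, sep d 0 u = 0 * (d - π) := by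
      apply integral_eq_of_eqOn_Ioo (by linarith) _ (sep_intervalIntegrable _ _ _ _)
      intro v hv
      unfold sep
      rw [if_neg]
      have h1 : 0 < Real.sin (d - v) := Real.sin_pos_of_pos_of_lt_pi (by linarith [hv.2]) (by linarith [hv.1])
      have h2 : Real.sin v < 0 := sin_neg_on v hv.1 (by linarith [hv.2])
      rw [zero_sub, Real.sin_neg]
      nlinarith
    have i4 : ∫ u in d..(2*π), sep d 0 u = 1 * (2*π - d) := by
      apply integral_eq_of_eqOn_Ioo (by linarith) _ (sep_intervalIntegrable _ _ _ _)
      intro v hv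
      unfold sep
      rw [if_pos]
      have h1 : Real.sin (d - v) < 0 := by
        apply Real.sin_neg_of_neg_of_neg_pi_lt
        · linarith [hv.1]
        · linarith [hv.2]
      have h2 : Real.sin v < 0 := sin_neg_on v (by linarith [hv.1]) hv.2
      rw [zero_sub, Real.sin_neg]
      nlinarith
    have s1 : ∫ u in (0:ℝ)..π, sep d 0 u = (∫ u in (0:ℝ)..(d-π), sep d 0 u) + ∫ u in (d-π)..π, sep d 0 u :=
      (intervalIntegral.integral_add_adjacent_intervals (sep_intervalIntegrable _ _ _ _) (sep_intervalIntegrable _ _ _ _)).symm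
    have s2 : ∫ u in π..(2*π), sep d 0 u = (∫ u in π..d, sep d 0 u) + ∫ u in d..(2*π), sep d 0 u :=
      (intervalIntegral.integral_add_adjacent_intervals (sep_intervalIntegrable _ _ _ _) (sep_intervalIntegrable _ _ _ _)).symm
    have s0 : ∫ u in (0:ℝ)..(2*π), sep d 0 u = (∫ u in (0:ℝ)..π, sep d 0 u) + ∫ u in π..(2*π), sep d 0 u :=
      (intervalIntegral.integral_add_adjacent_intervals (sep_intervalIntegrable _ _ _ _) (sep_intervalIntegrable _ _ _ _)).symm
    have harc : Real.arccos (Real.cos d) = 2*π - d := by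
      rw [show d = 2*π - (2*π - d) by ring, Real.cos_two_pi_sub, Real.arccos_cos (by linarith) (by linarith)]; ring
    rw [s0, s1, s2, i1, i2, i3, i4, harc]
    ring

open Real in
lemma sep0_integral (d : ℝ) :
    ∫ u in (0:ℝ)..(2*π), sep d 0 u = 2 * Real.arccos (Real.cos d) := by
  have h2pi : (0:ℝ) < 2*π := by linarith [Real.pi_pos]
  set k : ℤ := ⌊d / (2*π)⌋ with hk
  set d' : ℝ := d - k * (2*π) with hd'
  have hd0 : 0 ≤ d' := Int.sub_floor_div_mul_nonneg d h2pi
  have hd2 : d' < 2*π := Int.sub_floor_div_mul_lt d h2pi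
  have hsep : sep d 0 = sep d' 0 := by
    funext u
    unfold sep
    rw [show d - u = (d' - u) + k * (2*π) by rw [hd']; ring, Real.sin_add_int_mul_two_pi]
  have hcos : Real.cos d = Real.cos d' := by
    rw [show d = d' + k * (2*π) by rw [hd']; ring, Real.cos_add_int_mul_two_pi]
  rw [hsep, hcos]
  exact sep0_integral_core d' hd0 hd2

open Real in
lemma sep_integral (p q : ℝ) :
    ∫ u in (0:ℝ)..(2*π), sep p q u = 2 * Real.arccos (Real.cos (p - q)) := by
  have h1 : ∫ u in (0:ℝ)..(2*π), sep p q u = ∫ u in q..(q + 2*π), sep p q u := by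
    have := (sep_periodic p q).intervalIntegral_add_eq 0 q
    rwa [zero_add] at this
  have h2 : ∫ u in q..(q + 2*π), sep p q u = ∫ u in (0:ℝ)..(2*π), sep p q (u + q) := by
    rw [intervalIntegral.integral_comp_add_right (fun u => sep p q u) q, zero_add, add_comm (2*π) q]
  have h3 : ∀ u, sep p q (u + q) = sep (p - q) 0 u := by
    intro u
    unfold sep
    rw [show p - (u + q) = (p - q) - u by ring, show q - (u + q) = 0 - u by ring]
  rw [h1, h2]
  simp only [h3]
  exact sep0_integral (p - q)

open Real in
lemma arccos_abs_cos (d : ℝ) : Real.arccos |Real.cos d| = Real.arccos (Real.cos (2*d)) / 2 := by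
  have hb : |Real.cos d| ≤ 1 := abs_cos_le_one d
  have h1 : Real.cos (2 * Real.arccos |Real.cos d|) = Real.cos (2*d) := by
    rw [Real.cos_two_mul, Real.cos_arccos (by linarith [abs_nonneg (Real.cos d)]) hb, sq_abs,
      ← Real.cos_two_mul]
  have h0 : 0 ≤ Real.arccos |Real.cos d| := Real.arccos_nonneg _
  have h2 : Real.arccos |Real.cos d| ≤ π/2 := Real.arccos_le_pi_div_two.2 (abs_nonneg _)
  rw [← h1, Real.arccos_cos (by linarith) (by linarith)]
  ring

lemma sep_eq_prod (p q u : ℝ) :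
    sep p q u = (if 0 < Real.sin (p - u) then (1:ℝ) else 0) * (if Real.sin (q - u) < 0 then 1 else 0)
              + (if Real.sin (p - u) < 0 then (1:ℝ) else 0) * (if 0 < Real.sin (q - u) then 1 else 0) := by
  unfold sep
  rcases lt_trichotomy (Real.sin (p-u)) 0 with h|h|h <;>
    rcases lt_trichotomy (Real.sin (q-u)) 0 with h'|h'|h'
  · rw [if_neg (by nlinarith), if_neg (asymm h), if_pos h', if_pos h, if_neg (asymm h')]; ring
  · rw [if_neg (by rw [h']; simp), if_neg (asymm h), if_neg (by rw [h']; simp), if_pos h,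
      if_neg (by rw [h']; simp)]; ring
  · rw [if_pos (by nlinarith), if_neg (asymm h), if_neg (asymm h'), if_pos h, if_pos h']; ring
  · simp [h]
  · simp [h]
  · simp [h]
  · rw [if_pos (by nlinarith), if_pos h, if_pos h', if_neg (asymm h), if_neg (asymm h')]; ring
  · rw [if_neg (by rw [h']; simp), if_pos h, if_neg (by rw [h']; simp), if_neg (asymm h),
      if_neg (by rw [h']; simp)]; ring
  · rw [if_neg (by nlinarith), if_pos h, if_neg (asymm h'), if_neg (asymm h), if_pos h']; ring

open Real in
lemma sep_sum_eq (N : ℕ) (φ : Fin N → ℝ) (u : ℝ) :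
    ∑ i, ∑ j, sep (φ i) (φ j) u
      = 2 * ((Finset.univ.filter (fun i : Fin N => 0 < Real.sin (φ i - u))).card : ℝ)
          * ((Finset.univ.filter (fun i : Fin N => Real.sin (φ i - u) < 0)).card : ℝ) := by
  have key : ∀ (f g : Fin N → ℝ), ∑ i, ∑ j, (f i * g j + g i * f j)
      = (∑ i, f i) * (∑ i, g i) + (∑ i, g i) * (∑ i, f i) := by
    intro f g
    simp only [Finset.sum_add_distrib, ← Finset.mul_sum]
    rw [← Finset.sum_mul, ← Finset.sum_mul]
  simp only [sep_eq_prod]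
  rw [key]
  rw [Finset.sum_boole, Finset.sum_boole]
  ring

open Real in
lemma card_pos_neg_le (N : ℕ) (φ : Fin N → ℝ) (u : ℝ) :
    (Finset.univ.filter (fun i : Fin N => 0 < Real.sin (φ i - u))).card
      + (Finset.univ.filter (fun i : Fin N => Real.sin (φ i - u) < 0)).card ≤ N := by
  have hd : Disjoint (Finset.univ.filter (fun i : Fin N => 0 < Real.sin (φ i - u)))
      (Finset.univ.filter (fun i : Fin N => Real.sin (φ i - u) < 0)) := by
    rw [Finset.disjoint_left]
    intro i hi hi'
    simp only [Finset.mem_filter] at hi hi'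
    exact absurd hi'.2 (asymm hi.2)
  rw [← Finset.card_union_of_disjoint hd]
  have := Finset.card_le_univ ((Finset.univ.filter (fun i : Fin N => 0 < Real.sin (φ i - u)))
    ∪ (Finset.univ.filter (fun i : Fin N => Real.sin (φ i - u) < 0)))
  simpa using this

open Real in
lemma sep_sum_le_even (N : ℕ) (φ : Fin N → ℝ) (u : ℝ) :
    ∑ i, ∑ j, sep (φ i) (φ j) u ≤ (N:ℝ)^2 / 2 := by
  rw [sep_sum_eq]
  set P := (Finset.univ.filter (fun i : Fin N => 0 < Real.sin (φ i - u))).card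
  set M := (Finset.univ.filter (fun i : Fin N => Real.sin (φ i - u) < 0)).card
  have h := card_pos_neg_le N φ u
  have h' : (P:ℝ) + M ≤ N := by exact_mod_cast h
  have hP : (0:ℝ) ≤ P := Nat.cast_nonneg _
  have hM : (0:ℝ) ≤ M := Nat.cast_nonneg _
  nlinarith [sq_nonneg ((P:ℝ) - M), sq_nonneg ((P:ℝ) + M)]

open Real in
lemma sep_sum_le_odd (N : ℕ) (hN : Odd N) (φ : Fin N → ℝ) (u : ℝ) :
    ∑ i, ∑ j, sep (φ i) (φ j) u ≤ ((N:ℝ)^2 - 1) / 2 := by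
  rw [sep_sum_eq]
  set P := (Finset.univ.filter (fun i : Fin N => 0 < Real.sin (φ i - u))).card
  set M := (Finset.univ.filter (fun i : Fin N => Real.sin (φ i - u) < 0)).card
  have h := card_pos_neg_le N φ u
  obtain ⟨k, hk⟩ := hN
  have key : 4 * ((P:ℤ) * M) + 1 ≤ (N:ℤ)^2 := by
    have h1 : 4 * ((P:ℤ) * M) ≤ ((P:ℤ) + M)^2 := by nlinarith [sq_nonneg ((P:ℤ) - M)]
    have h2 : ((P:ℤ) + M)^2 ≤ (N:ℤ)^2 := by
      have h' : (P:ℤ) + M ≤ N := by exact_mod_cast h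
      have h'' : (0:ℤ) ≤ (P:ℤ) + M := by positivity
      nlinarith
    have h3 : (N:ℤ)^2 = 4*((k:ℤ)*k+k) + 1 := by
      have : (N:ℤ) = 2*k+1 := by exact_mod_cast hk
      rw [this]; ring
    have h4 : 4 * ((P:ℤ)*M) ≤ 4*((k:ℤ)*k+k) + 1 := by omega
    rw [h3]
    omega
  have key' : 4 * ((P:ℝ) * M) + 1 ≤ (N:ℝ)^2 := by exact_mod_cast key
  linarith

open Real in
lemma sum_arccos_le (N : ℕ) (φ : Fin N → ℝ) (C : ℝ)
    (hC : ∀ u, ∑ i, ∑ j, sep (φ i) (φ j) u ≤ C) :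
    ∑ i, ∑ j, Real.arccos (Real.cos (φ i - φ j)) ≤ C * π := by
  have pi_pos := Real.pi_pos
  have h1 : ∀ i : Fin N, IntervalIntegrable (fun u => ∑ j, sep (φ i) (φ j) u) volume 0 (2*π) := by
    intro i
    have := IntervalIntegrable.sum (μ := volume) (a := 0) (b := 2*π) Finset.univ
      (f := fun j : Fin N => sep (φ i) (φ j)) (fun j _ => sep_intervalIntegrable _ _ _ _)
    convert this using 1
    · rfl
    funext u
    simp
  have h2 : IntervalIntegrable (fun u => ∑ i, ∑ j, sep (φ i) (φ j) u) volume 0 (2*π) := by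
    have := IntervalIntegrable.sum (μ := volume) (a := 0) (b := 2*π) Finset.univ
      (f := fun i : Fin N => fun u => ∑ j, sep (φ i) (φ j) u) (fun i _ => h1 i)
    convert this using 1
    · rfl
    funext u
    simp
  have e1 : ∫ u in (0:ℝ)..(2*π), ∑ i, ∑ j, sep (φ i) (φ j) u
      = ∑ i, ∑ j, 2 * Real.arccos (Real.cos (φ i - φ j)) := by
    rw [intervalIntegral.integral_finset_sum (fun i _ => h1 i)]
    refine Finset.sum_congr rfl fun i _ => ?_
    rw [intervalIntegral.integral_finset_sum (fun j _ => sep_intervalIntegrable _ _ _ _)]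
    exact Finset.sum_congr rfl fun j _ => sep_integral _ _
  have mono : ∫ u in (0:ℝ)..(2*π), ∑ i, ∑ j, sep (φ i) (φ j) u
      ≤ ∫ _u in (0:ℝ)..(2*π), C := by
    apply intervalIntegral.integral_mono_on (by linarith) h2 (intervalIntegrable_const)
    exact fun u _ => hC u
  rw [e1, intervalIntegral.integral_const, smul_eq_mul] at mono
  have : ∑ i, ∑ j, 2 * Real.arccos (Real.cos (φ i - φ j))
      = 2 * ∑ i, ∑ j, Real.arccos (Real.cos (φ i - φ j)) := by
    simp [Finset.mul_sum]
  rw [this] at mono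
  linarith

lemma exists_angle (y : EuclideanSpace ℝ (Fin 2)) (hy : ‖y‖ = 1) :
    ∃ θ : ℝ, y 0 = Real.cos θ ∧ y 1 = Real.sin θ := by
  have hsum : (y 0)^2 + (y 1)^2 = 1 := by
    have h := hy
    rw [EuclideanSpace.norm_eq] at h
    have h2 : ∑ i : Fin 2, ‖y i‖^2 = 1 := by
      have h3 := congrArg (·^2) h
      simp only [one_pow] at h3
      rwa [Real.sq_sqrt (by positivity)] at h3
    simpa [Fin.sum_univ_two, sq_abs] using h2
  set z : ℂ := ⟨y 0, y 1⟩ with hz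
  have habs : ‖z‖ = 1 := by
    rw [Complex.norm_def, Complex.normSq_mk, show y 0 * y 0 + y 1 * y 1 = 1 by nlinarith]
    exact Real.sqrt_one
  have hz0 : z ≠ 0 := by
    intro h0
    rw [h0] at habs
    simp at habs
  refine ⟨Complex.arg z, ?_, ?_⟩
  · rw [Complex.cos_arg hz0, habs]
    simp [hz]
  · rw [Complex.sin_arg, habs]
    simp [hz]

open RealInnerProductSpace

/-- Fejes Tóth's problem in the plane: for unit vectors `x₁, …, x_N` in `ℝ²`, the sum of
all pairwise line angles (over ordered pairs, including `i = j`) is at most `πN²/4` for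
even `N` and at most `π(N² - 1)/4` for odd `N`. -/
theorem fejes_toth_plane (N : ℕ) (x : Fin N → EuclideanSpace ℝ (Fin 2))
    (hx : ∀ i, ‖x i‖ = 1) :
    (Even N → ∑ i, ∑ j, Real.arccos |⟪x i, x j⟫| ≤ Real.pi * (N : ℝ) ^ 2 / 4) ∧
    (Odd N → ∑ i, ∑ j, Real.arccos |⟪x i, x j⟫| ≤ Real.pi * ((N : ℝ) ^ 2 - 1) / 4) := by
  choose θ h0 h1 using fun i => exists_angle (x i) (hx i)
  have hinner : ∀ i j, ⟪x i, x j⟫ = Real.cos (θ i - θ j) := by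
    intro i j
    rw [Real.cos_sub]
    simp only [PiLp.inner_apply, RCLike.inner_apply, conj_trivial, Fin.sum_univ_two,
      h0, h1]
    ring
  set φ : Fin N → ℝ := fun i => 2 * θ i with hφ
  have hS : ∑ i, ∑ j, Real.arccos |⟪x i, x j⟫|
      = (∑ i, ∑ j, Real.arccos (Real.cos (φ i - φ j))) / 2 := by
    rw [Finset.sum_div]
    refine Finset.sum_congr rfl fun i _ => ?_
    rw [Finset.sum_div]
    refine Finset.sum_congr rfl fun j _ => ?_
    rw [hinner i j, arccos_abs_cos, show 2*(θ i - θ j) = φ i - φ j by rw [hφ]; ring]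
  constructor
  · intro _
    rw [hS]
    have := sum_arccos_le N φ ((N:ℝ)^2/2) (fun u => sep_sum_le_even N φ u)
    linarith
  · intro hodd
    rw [hS]
    have := sum_arccos_le N φ (((N:ℝ)^2-1)/2) (fun u => sep_sum_le_odd N hodd φ u)
    linarith
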